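/- arXiv:1409.4074 — 2 statements merged into one kernel-verified Lean document; each statement's English description precedes it below -/
import Mathlib

section
/- The bowling-ball matrices define a representation of the positive braid monoid: there exists a monoid homomorphism ρ from the monoid presented by generators σ_1,…,σ_{n−1} subject to the relations σ_i σ_j = σ_j σ_i for |i − j| ≥ 2 and σ_i σ_{i+1} σ_i = σ_{i+1} σ_i σ_{i+1}, into the multiplicative monoid of square matrices over F indexed by S, such that ρ(σ_i) = M_i for every i. -/
open Matrix

/-- The tuple `u` with the entries in positions `i` and `i+1` interchanged
(0-indexed; returns `u` unchanged if `i+1` is out of range). -/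
def swapTup (n N : ℕ) (i : ℕ) (u : Fin n → Fin (N + 1)) : Fin n → Fin (N + 1) :=
  if h : i + 1 < n then u ∘ Equiv.swap ⟨i, Nat.lt_of_succ_lt h⟩ ⟨i + 1, h⟩ else u

/-- Jones's bowling-ball matrix `M_i` (0-indexed: `i` ranges over `0,…,n-2`,
corresponding to the lanes `i+1` and `i+2` in 1-indexed notation; it is the
identity matrix out of range).  Rows and columns are indexed by the tuples
`u : Fin n → Fin (N+1)` recording the number of balls in each lane:
`M_i e_u = e_{s_i u}` if `u i ≤ u (i+1)`, and
`M_i e_u = q • e_{s_i u} + (1-q) • e_u` if `u i > u (i+1)`. -/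
def bowlM (F : Type*) [Field F] (q : F) (n N : ℕ) (i : ℕ) :
    Matrix (Fin n → Fin (N + 1)) (Fin n → Fin (N + 1)) F :=
  if h : i + 1 < n then
    Matrix.of fun v u =>
      if u ⟨i, Nat.lt_of_succ_lt h⟩ ≤ u ⟨i + 1, h⟩ then
        (if v = swapTup n N i u then 1 else 0)
      else
        q * (if v = swapTup n N i u then 1 else 0) + (1 - q) * (if v = u then 1 else 0)
  else 1

/-- The defining relations of the positive braid monoid `B_n^+` on the
generators `σ_1, …, σ_{n-1}` (indexed here by `Fin (n-1)`, 0-indexed):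
far commutativity `σ_i σ_j = σ_j σ_i` for `|i - j| ≥ 2`, and the braid
relation `σ_i σ_{i+1} σ_i = σ_{i+1} σ_i σ_{i+1}`. -/
def braidRels (n : ℕ) : FreeMonoid (Fin (n - 1)) → FreeMonoid (Fin (n - 1)) → Prop :=
  fun x y =>
    (∃ i j : Fin (n - 1), ((i : ℕ) + 2 ≤ j ∨ (j : ℕ) + 2 ≤ i) ∧
      x = FreeMonoid.of i * FreeMonoid.of j ∧ y = FreeMonoid.of j * FreeMonoid.of i) ∨
    (∃ i j : Fin (n - 1), (j : ℕ) = (i : ℕ) + 1 ∧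
      x = FreeMonoid.of i * FreeMonoid.of j * FreeMonoid.of i ∧
      y = FreeMonoid.of j * FreeMonoid.of i * FreeMonoid.of j)

/-- The positive braid monoid `B_n^+`, presented by the generators
`σ_1, …, σ_{n-1}` modulo far commutativity and the braid relations. -/
def PositiveBraidMonoid (n : ℕ) := (conGen (braidRels n)).Quotient

instance (n : ℕ) : Monoid (PositiveBraidMonoid n) :=
  inferInstanceAs (Monoid (conGen (braidRels n)).Quotient)

/-- The generator `σ_i` of the positive braid monoid. -/
def PositiveBraidMonoid.sigma (n : ℕ) (i : Fin (n - 1)) : PositiveBraidMonoid n :=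
  (conGen (braidRels n)).mk' (FreeMonoid.of i)

section Aux

variable {F : Type*} [Field F] {n N : ℕ}

private lemma braid_key {α : Type*} [LinearOrder α] (q : F) (x y z : α) (d : α → α → α → F) :
    (if x ≤ y then (1:F) else q) *
      ((if x ≤ z then (1:F) else q) *
        ((if y ≤ z then (1:F) else q) * d z y x + (if y ≤ z then (0:F) else 1-q) * d y z x) +
       (if x ≤ z then (0:F) else 1-q) *
        ((if y ≤ x then (1:F) else q) * d x y z + (if y ≤ x then (0:F) else 1-q) * d y x z)) +
    (if x ≤ y then (0:F) else 1-q) *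
      ((if y ≤ z then (1:F) else q) *
        ((if x ≤ z then (1:F) else q) * d z x y + (if x ≤ z then (0:F) else 1-q) * d x z y) +
       (if y ≤ z then (0:F) else 1-q) *
        ((if x ≤ y then (1:F) else q) * d y x z + (if x ≤ y then (0:F) else 1-q) * d x y z))
  = (if y ≤ z then (1:F) else q) *
      ((if x ≤ z then (1:F) else q) *
        ((if x ≤ y then (1:F) else q) * d z y x + (if x ≤ y then (0:F) else 1-q) * d z x y) +
       (if x ≤ z then (0:F) else 1-q) *
        ((if z ≤ y then (1:F) else q) * d x y z + (if z ≤ y then (0:F) else 1-q) * d x z y)) +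
    (if y ≤ z then (0:F) else 1-q) *
      ((if x ≤ y then (1:F) else q) *
        ((if x ≤ z then (1:F) else q) * d y z x + (if x ≤ z then (0:F) else 1-q) * d y x z) +
       (if x ≤ y then (0:F) else 1-q) *
        ((if y ≤ z then (1:F) else q) * d x z y + (if y ≤ z then (0:F) else 1-q) * d x y z)) := by
  rcases lt_trichotomy x y with h1 | h1 | h1
  · rcases lt_trichotomy y z with h2 | h2 | h2
    · simp only [if_pos h1.le, if_neg (not_le.mpr h1), if_pos h2.le, if_neg (not_le.mpr h2),
        if_pos (h1.trans h2).le]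
      ring
    · subst h2
      simp only [if_pos h1.le, if_neg (not_le.mpr h1), le_refl, if_pos, if_true]
      ring
    · rcases le_or_gt x z with h3 | h3
      · simp only [if_pos h1.le, if_neg (not_le.mpr h1), if_pos h2.le, if_neg (not_le.mpr h2),
          if_pos h3]
        ring
      · simp only [if_pos h1.le, if_neg (not_le.mpr h1), if_pos h2.le, if_neg (not_le.mpr h2),
          if_neg (not_le.mpr h3)]
        ring
  · subst h1
    rcases le_or_gt x z with h3 | h3 <;> rcases le_or_gt z x with h4 | h4
    · simp only [le_refl, if_pos, if_true, if_pos h3, if_pos h4]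
      ring
    · simp only [le_refl, if_pos, if_true, if_pos h3, if_neg (not_le.mpr h4)]
      ring
    · simp only [le_refl, if_pos, if_true, if_neg (not_le.mpr h3), if_pos h4]
      ring
    · exact absurd h4 (not_lt.mpr h3.le)
  · rcases lt_trichotomy y z with h2 | h2 | h2
    · rcases le_or_gt x z with h3 | h3
      · simp only [if_pos h1.le, if_neg (not_le.mpr h1), if_pos h2.le, if_neg (not_le.mpr h2),
          if_pos h3]
        ring
      · simp only [if_pos h1.le, if_neg (not_le.mpr h1), if_pos h2.le, if_neg (not_le.mpr h2),
          if_neg (not_le.mpr h3)]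
        ring
    · subst h2
      simp only [if_pos h1.le, if_neg (not_le.mpr h1), le_refl, if_pos, if_true]
      ring
    · simp only [if_pos h1.le, if_neg (not_le.mpr h1), if_pos h2.le, if_neg (not_le.mpr h2),
        if_neg (not_le.mpr (h2.trans h1))]
      ring

private lemma bowl_apply {i : ℕ} (h : i + 1 < n) (q : F) (v u : Fin n → Fin (N + 1)) :
    bowlM F q n N i v u =
      (if u ⟨i, Nat.lt_of_succ_lt h⟩ ≤ u ⟨i + 1, h⟩ then (1 : F) else q) *
        (if v = swapTup n N i u then 1 else 0) +
      (if u ⟨i, Nat.lt_of_succ_lt h⟩ ≤ u ⟨i + 1, h⟩ then (0 : F) else 1 - q) *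
        (if v = u then 1 else 0) := by
  simp only [bowlM, dif_pos h, Matrix.of_apply]
  split_ifs <;> ring

private lemma mul_bowl {i : ℕ} (h : i + 1 < n) (q : F)
    (A : Matrix (Fin n → Fin (N + 1)) (Fin n → Fin (N + 1)) F) (v u : Fin n → Fin (N + 1)) :
    (A * bowlM F q n N i) v u =
      (if u ⟨i, Nat.lt_of_succ_lt h⟩ ≤ u ⟨i + 1, h⟩ then (1 : F) else q) * A v (swapTup n N i u) +
      (if u ⟨i, Nat.lt_of_succ_lt h⟩ ≤ u ⟨i + 1, h⟩ then (0 : F) else 1 - q) * A v u := by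
  have key : ∀ (c : F) (w : Fin n → Fin (N + 1)),
      ∑ j, A v j * (c * (if j = w then (1 : F) else 0)) = c * A v w := by
    intro c w
    simp only [mul_ite, mul_one, mul_zero, Finset.sum_ite_eq', Finset.mem_univ, if_true]
    ring
  rw [Matrix.mul_apply]
  simp only [bowl_apply h q, mul_add, Finset.sum_add_distrib, key]

private lemma swapTup_fst {i : ℕ} (h : i + 1 < n) (u : Fin n → Fin (N + 1)) :
    swapTup n N i u ⟨i, Nat.lt_of_succ_lt h⟩ = u ⟨i + 1, h⟩ := by
  simp [swapTup, h]

private lemma swapTup_snd {i : ℕ} (h : i + 1 < n) (u : Fin n → Fin (N + 1)) :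
    swapTup n N i u ⟨i + 1, h⟩ = u ⟨i, Nat.lt_of_succ_lt h⟩ := by
  simp [swapTup, h]

private lemma swapTup_other {i : ℕ} (h : i + 1 < n) (u : Fin n → Fin (N + 1)) (j : Fin n)
    (h1 : (j : ℕ) ≠ i) (h2 : (j : ℕ) ≠ i + 1) : swapTup n N i u j = u j := by
  simp only [swapTup, dif_pos h, Function.comp_apply]
  rw [Equiv.swap_apply_of_ne_of_ne (fun hh => h1 (by simpa using congrArg Fin.val hh))
    (fun hh => h2 (by simpa using congrArg Fin.val hh))]

private lemma swapTup_invol {i : ℕ} (h : i + 1 < n) (u : Fin n → Fin (N + 1)) :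
    swapTup n N i (swapTup n N i u) = u := by
  funext x
  simp [swapTup, h]

private lemma swap_commute {β : Type*} [DecidableEq β] {a b c d : β}
    (hac : a ≠ c) (had : a ≠ d) (hbc : b ≠ c) (hbd : b ≠ d) (x : β) :
    Equiv.swap c d (Equiv.swap a b x) = Equiv.swap a b (Equiv.swap c d x) := by
  rcases eq_or_ne x a with rfl | hxa
  · simp only [Equiv.swap_apply_left, Equiv.swap_apply_of_ne_of_ne hbc hbd,
      Equiv.swap_apply_of_ne_of_ne hac had]
  rcases eq_or_ne x b with rfl | hxb
  · simp only [Equiv.swap_apply_right, Equiv.swap_apply_of_ne_of_ne hac had,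
      Equiv.swap_apply_of_ne_of_ne hbc hbd]
  rcases eq_or_ne x c with rfl | hxc
  · simp only [Equiv.swap_apply_left, Equiv.swap_apply_of_ne_of_ne hac.symm hbc.symm,
      Equiv.swap_apply_of_ne_of_ne had.symm hbd.symm]
  rcases eq_or_ne x d with rfl | hxd
  · simp only [Equiv.swap_apply_right, Equiv.swap_apply_of_ne_of_ne had.symm hbd.symm,
      Equiv.swap_apply_of_ne_of_ne hac.symm hbc.symm]
  simp only [Equiv.swap_apply_of_ne_of_ne hxa hxb, Equiv.swap_apply_of_ne_of_ne hxc hxd]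

private lemma swap_braid {β : Type*} [DecidableEq β] {a b c : β}
    (hab : a ≠ b) (hac : a ≠ c) (hbc : b ≠ c) (x : β) :
    Equiv.swap a b (Equiv.swap b c (Equiv.swap a b x)) =
      Equiv.swap b c (Equiv.swap a b (Equiv.swap b c x)) := by
  rcases eq_or_ne x a with rfl | hxa
  · simp only [Equiv.swap_apply_left, Equiv.swap_apply_of_ne_of_ne hac.symm hbc.symm,
      Equiv.swap_apply_of_ne_of_ne hab hac]
  rcases eq_or_ne x b with rfl | hxb
  · simp only [Equiv.swap_apply_left, Equiv.swap_apply_right,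
      Equiv.swap_apply_of_ne_of_ne hab hac, Equiv.swap_apply_of_ne_of_ne hac.symm hbc.symm]
  rcases eq_or_ne x c with rfl | hxc
  · simp only [Equiv.swap_apply_right, Equiv.swap_apply_of_ne_of_ne hac.symm hbc.symm,
      Equiv.swap_apply_of_ne_of_ne hab hac]
  simp only [Equiv.swap_apply_of_ne_of_ne hxa hxb, Equiv.swap_apply_of_ne_of_ne hxb hxc]

private lemma swapTup_comm {i j : ℕ} (hij : i + 2 ≤ j) (hi : i + 1 < n) (hj : j + 1 < n)
    (u : Fin n → Fin (N + 1)) :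
    swapTup n N i (swapTup n N j u) = swapTup n N j (swapTup n N i u) := by
  funext x
  simp only [swapTup, dif_pos hi, dif_pos hj, Function.comp_apply]
  congr 1
  exact swap_commute (a := ⟨i, Nat.lt_of_succ_lt hi⟩) (b := ⟨i + 1, hi⟩)
    (c := ⟨j, Nat.lt_of_succ_lt hj⟩) (d := ⟨j + 1, hj⟩)
    (by simp only [ne_eq, Fin.mk.injEq]; omega) (by simp only [ne_eq, Fin.mk.injEq]; omega)
    (by simp only [ne_eq, Fin.mk.injEq]; omega) (by simp only [ne_eq, Fin.mk.injEq]; omega)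
    x

private lemma swapTup_braid {i : ℕ} (h : i + 1 + 1 < n) (u : Fin n → Fin (N + 1)) :
    swapTup n N (i + 1) (swapTup n N i (swapTup n N (i + 1) u)) =
      swapTup n N i (swapTup n N (i + 1) (swapTup n N i u)) := by
  have h1 : i + 1 < n := Nat.lt_of_succ_lt h
  funext x
  simp only [swapTup, dif_pos h1, dif_pos h, Function.comp_apply]
  congr 1
  exact (swap_braid (a := ⟨i, Nat.lt_of_succ_lt h1⟩) (b := ⟨i + 1, h1⟩) (c := ⟨i + 1 + 1, h⟩)
    (by simp only [ne_eq, Fin.mk.injEq]; omega) (by simp only [ne_eq, Fin.mk.injEq]; omega)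
    (by simp only [ne_eq, Fin.mk.injEq]; omega) x).symm

private def upd3 (u : Fin n → Fin (N + 1)) (k0 k1 k2 : Fin n) (a b c : Fin (N + 1)) :
    Fin n → Fin (N + 1) :=
  Function.update (Function.update (Function.update u k0 a) k1 b) k2 c

private lemma upd3_eq {k0 k1 k2 : Fin n} (h01 : k0 ≠ k1) (h02 : k0 ≠ k2) (h12 : k1 ≠ k2)
    {w u : Fin n → Fin (N + 1)} {a b c : Fin (N + 1)}
    (h0 : w k0 = a) (h1 : w k1 = b) (h2 : w k2 = c)
    (hout : ∀ x, x ≠ k0 → x ≠ k1 → x ≠ k2 → w x = u x) :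
    w = upd3 u k0 k1 k2 a b c := by
  funext x
  rcases eq_or_ne x k0 with rfl | hx0
  · simpa [upd3, Function.update_of_ne h02, Function.update_of_ne h01] using h0
  · rcases eq_or_ne x k1 with rfl | hx1
    · simpa [upd3, Function.update_of_ne h12] using h1
    · rcases eq_or_ne x k2 with rfl | hx2
      · simpa [upd3] using h2
      · simp [upd3, Function.update_of_ne hx0, Function.update_of_ne hx1,
          Function.update_of_ne hx2, hout x hx0 hx1 hx2]

private lemma bowl_comm {i j : ℕ} (hij : i + 2 ≤ j) (hj : j + 1 < n) (q : F) :
    bowlM F q n N i * bowlM F q n N j = bowlM F q n N j * bowlM F q n N i := by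
  have hi : i + 1 < n := by omega
  ext v u
  rw [mul_bowl hj q, mul_bowl hi q]
  simp only [bowl_apply hi q, bowl_apply hj q]
  have e1 : ∀ w : Fin n → Fin (N + 1),
      swapTup n N j w ⟨i, Nat.lt_of_succ_lt hi⟩ = w ⟨i, Nat.lt_of_succ_lt hi⟩ :=
    fun w => swapTup_other hj w _ (show i ≠ j by omega) (show i ≠ j + 1 by omega)
  have e2 : ∀ w : Fin n → Fin (N + 1),
      swapTup n N j w ⟨i + 1, hi⟩ = w ⟨i + 1, hi⟩ :=
    fun w => swapTup_other hj w _ (show i + 1 ≠ j by omega) (show i + 1 ≠ j + 1 by omega)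
  have e3 : ∀ w : Fin n → Fin (N + 1),
      swapTup n N i w ⟨j, Nat.lt_of_succ_lt hj⟩ = w ⟨j, Nat.lt_of_succ_lt hj⟩ :=
    fun w => swapTup_other hi w _ (show j ≠ i by omega) (show j ≠ i + 1 by omega)
  have e4 : ∀ w : Fin n → Fin (N + 1),
      swapTup n N i w ⟨j + 1, hj⟩ = w ⟨j + 1, hj⟩ :=
    fun w => swapTup_other hi w _ (show j + 1 ≠ i by omega) (show j + 1 ≠ i + 1 by omega)
  simp only [e1, e2, e3, e4, swapTup_comm hij hi hj u]
  ring

private lemma bowl_braid {i : ℕ} (h : i + 1 + 1 < n) (q : F) :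
    bowlM F q n N i * bowlM F q n N (i + 1) * bowlM F q n N i =
      bowlM F q n N (i + 1) * bowlM F q n N i * bowlM F q n N (i + 1) := by
  have h1 : i + 1 < n := Nat.lt_of_succ_lt h
  ext v u
  simp only [mul_bowl h1 q, mul_bowl h q, bowl_apply h1 q, bowl_apply h q]
  have hA : ∀ w : Fin n → Fin (N + 1),
      swapTup n N i w ⟨i, Nat.lt_of_succ_lt h1⟩ = w ⟨i + 1, h1⟩ := fun w => swapTup_fst h1 w
  have hB : ∀ w : Fin n → Fin (N + 1),
      swapTup n N i w ⟨i + 1, h1⟩ = w ⟨i, Nat.lt_of_succ_lt h1⟩ := fun w => swapTup_snd h1 w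
  have hC : ∀ w : Fin n → Fin (N + 1),
      swapTup n N i w ⟨i + 1 + 1, h⟩ = w ⟨i + 1 + 1, h⟩ :=
    fun w => swapTup_other h1 w _ (show i + 2 ≠ i by omega) (show i + 2 ≠ i + 1 by omega)
  have hD : ∀ w : Fin n → Fin (N + 1),
      swapTup n N (i + 1) w ⟨i, Nat.lt_of_succ_lt h1⟩ = w ⟨i, Nat.lt_of_succ_lt h1⟩ :=
    fun w => swapTup_other h w _ (show i ≠ i + 1 by omega) (show i ≠ i + 1 + 1 by omega)
  have hE : ∀ w : Fin n → Fin (N + 1),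
      swapTup n N (i + 1) w ⟨i + 1, h1⟩ = w ⟨i + 1 + 1, h⟩ := fun w => swapTup_fst h w
  have hF : ∀ w : Fin n → Fin (N + 1),
      swapTup n N (i + 1) w ⟨i + 1 + 1, h⟩ = w ⟨i + 1, h1⟩ := fun w => swapTup_snd h w
  simp only [hA, hB, hC, hD, hE, hF, swapTup_invol h1, swapTup_invol (i := i + 1) h,
    swapTup_braid h]
  have ne01 : (⟨i, Nat.lt_of_succ_lt h1⟩ : Fin n) ≠ ⟨i + 1, h1⟩ := by
    simp only [ne_eq, Fin.mk.injEq]; omega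
  have ne02 : (⟨i, Nat.lt_of_succ_lt h1⟩ : Fin n) ≠ ⟨i + 1 + 1, h⟩ := by
    simp only [ne_eq, Fin.mk.injEq]; omega
  have ne12 : (⟨i + 1, h1⟩ : Fin n) ≠ ⟨i + 1 + 1, h⟩ := by
    simp only [ne_eq, Fin.mk.injEq]; omega
  have houti : ∀ (w : Fin n → Fin (N + 1)) x, x ≠ (⟨i, Nat.lt_of_succ_lt h1⟩ : Fin n) →
      x ≠ ⟨i + 1, h1⟩ → swapTup n N i w x = w x :=
    fun w x hx0 hx1 => swapTup_other h1 w x (fun hh => hx0 (Fin.ext hh)) (fun hh => hx1 (Fin.ext hh))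
  have houtt : ∀ (w : Fin n → Fin (N + 1)) x, x ≠ (⟨i + 1, h1⟩ : Fin n) →
      x ≠ ⟨i + 1 + 1, h⟩ → swapTup n N (i + 1) w x = w x :=
    fun w x hx1 hx2 => swapTup_other h w x (fun hh => hx1 (Fin.ext hh)) (fun hh => hx2 (Fin.ext hh))
  set k0 : Fin n := ⟨i, Nat.lt_of_succ_lt h1⟩ with hk0
  set k1 : Fin n := ⟨i + 1, h1⟩ with hk1
  set k2 : Fin n := ⟨i + 1 + 1, h⟩ with hk2
  have E1 : swapTup n N i u = upd3 u k0 k1 k2 (u k1) (u k0) (u k2) :=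
    upd3_eq ne01 ne02 ne12 (hA u) (hB u) (hC u) (fun x hx0 hx1 _ => houti u x hx0 hx1)
  have E2 : swapTup n N (i + 1) u = upd3 u k0 k1 k2 (u k0) (u k2) (u k1) :=
    upd3_eq ne01 ne02 ne12 (hD u) (hE u) (hF u) (fun x _ hx1 hx2 => houtt u x hx1 hx2)
  have E3 : swapTup n N (i + 1) (swapTup n N i u) = upd3 u k0 k1 k2 (u k1) (u k2) (u k0) :=
    upd3_eq ne01 ne02 ne12 (by rw [hD, hA]) (by rw [hE, hC]) (by rw [hF, hB])
      (fun x hx0 hx1 hx2 => by rw [houtt _ x hx1 hx2, houti u x hx0 hx1])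
  have E4 : swapTup n N i (swapTup n N (i + 1) u) = upd3 u k0 k1 k2 (u k2) (u k0) (u k1) :=
    upd3_eq ne01 ne02 ne12 (by rw [hA, hE]) (by rw [hB, hD]) (by rw [hC, hF])
      (fun x hx0 hx1 hx2 => by rw [houti _ x hx0 hx1, houtt u x hx1 hx2])
  have E5 : swapTup n N i (swapTup n N (i + 1) (swapTup n N i u)) =
      upd3 u k0 k1 k2 (u k2) (u k1) (u k0) :=
    upd3_eq ne01 ne02 ne12 (by rw [hA, hE, hC]) (by rw [hB, hD, hA]) (by rw [hC, hF, hB])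
      (fun x hx0 hx1 hx2 => by
        rw [houti _ x hx0 hx1, houtt _ x hx1 hx2, houti u x hx0 hx1])
  have E6 : (if v = u then (1:F) else 0) =
      (if v = upd3 u k0 k1 k2 (u k0) (u k1) (u k2) then (1:F) else 0) := by
    rw [← upd3_eq ne01 ne02 ne12 rfl rfl rfl (fun _ _ _ _ => rfl)]
  rw [E5, E3, E4, E1, E2, E6]
  exact braid_key q (u k0) (u k1) (u k2)
    (fun a b c => if v = upd3 u k0 k1 k2 a b c then (1:F) else 0)

end Aux

/-- **Theorem 1: the bowling-ball matrices define a representation of the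
positive braid monoid.**  There is a monoid homomorphism `ρ` from `B_n^+`
to the multiplicative monoid of square matrices indexed by the tuples of
ball counts, sending each generator `σ_i` to the bowling-ball matrix
`M_i`. -/
theorem bowlM_is_representation (F : Type*) [Field F] (q : F) (n N : ℕ)
    (hn : 2 ≤ n) (hN : 1 ≤ N) :
    ∃ ρ : PositiveBraidMonoid n →*
        Matrix (Fin n → Fin (N + 1)) (Fin n → Fin (N + 1)) F,
      ∀ i : Fin (n - 1), ρ (PositiveBraidMonoid.sigma n i) = bowlM F q n N i := by
  set φ : FreeMonoid (Fin (n - 1)) →* Matrix (Fin n → Fin (N + 1)) (Fin n → Fin (N + 1)) F :=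
    FreeMonoid.lift fun i : Fin (n - 1) => bowlM F q n N i with hφ
  have hker : conGen (braidRels n) ≤ Con.ker φ := by
    apply Con.conGen_le.mpr
    rintro x y (⟨i, j, hij, rfl, rfl⟩ | ⟨i, j, hji, rfl, rfl⟩)
    · rw [Con.ker_rel]
      simp only [hφ, _root_.map_mul, FreeMonoid.lift_eval_of]
      rcases hij with hc | hc
      · exact bowl_comm hc (by have := j.isLt; omega) q
      · exact (bowl_comm hc (by have := i.isLt; omega) q).symm
    · rw [Con.ker_rel]
      simp only [hφ, _root_.map_mul, FreeMonoid.lift_eval_of]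
      rw [hji]
      exact bowl_braid (by have := j.isLt; omega) q
  refine ⟨Con.lift _ φ hker, fun i => ?_⟩
  show φ (FreeMonoid.of i) = _
  exact FreeMonoid.lift_eval_of _ i
end

section
/- Factorization identity (Equation (1) at the matrix level): for every index i with 1 ≤ i ≤ n−1, the alternating sum over all permutations of {1,…,n} factors as ∑_{w ∈ S_n} sgn(w)·P_w = ( ∑_{w ∈ S_n, w(i) < w(i+1)} sgn(w)·P_w ) · (I − M_i), where P_w = M_{i_1}⋯M_{i_ℓ} for any reduced word (i_1,…,i_ℓ) of w, sgn(w) = ±1 is the sign of w (viewed in F), and I is the identity matrix. -/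
open Matrix

/-- The adjacent transposition `s_i = (i, i+1)` of `Fin n`
(0-indexed; the identity permutation out of range). -/
def adjSwap (n : ℕ) (i : ℕ) : Equiv.Perm (Fin n) :=
  if h : i + 1 < n then Equiv.swap ⟨i, Nat.lt_of_succ_lt h⟩ ⟨i + 1, h⟩ else 1

/-- The number of inversions of a permutation `w` of `Fin n`:
the number of pairs `i < j` with `w j < w i`. -/
def inversions (n : ℕ) (w : Equiv.Perm (Fin n)) : ℕ :=
  (Finset.univ.filter fun p : Fin n × Fin n => p.1 < p.2 ∧ w p.2 < w p.1).card

section Aux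

variable {n : ℕ}

lemma swap_adj_lt {i : ℕ} (hi : i + 1 < n) {x y : Fin n} (hxy : x < y)
    (hne : (x, y) ≠ ((⟨i, Nat.lt_of_succ_lt hi⟩ : Fin n), (⟨i + 1, hi⟩ : Fin n))) :
    Equiv.swap (⟨i, Nat.lt_of_succ_lt hi⟩ : Fin n) ⟨i + 1, hi⟩ x
      < Equiv.swap (⟨i, Nat.lt_of_succ_lt hi⟩ : Fin n) ⟨i + 1, hi⟩ y := by
  have h1 : ¬ (x = (⟨i, Nat.lt_of_succ_lt hi⟩ : Fin n) ∧ y = (⟨i+1, hi⟩ : Fin n)) := by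
    intro ⟨h1, h2⟩; exact hne (by rw [h1, h2])
  simp only [Equiv.swap_apply_def]
  rw [Fin.lt_def] at hxy ⊢
  simp only [Fin.ext_iff] at h1 ⊢
  split_ifs <;> simp_all <;> omega

lemma adjSwap_eq {i : ℕ} (hi : i + 1 < n) :
    adjSwap n i = Equiv.swap (⟨i, Nat.lt_of_succ_lt hi⟩ : Fin n) ⟨i + 1, hi⟩ :=
  dif_pos hi

lemma inversions_mul_adjSwap {i : ℕ} (hi : i + 1 < n) (w : Equiv.Perm (Fin n))
    (hw : w ⟨i, Nat.lt_of_succ_lt hi⟩ < w ⟨i + 1, hi⟩) :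
    inversions n (w * adjSwap n i) = inversions n w + 1 := by
  set a : Fin n := ⟨i, Nat.lt_of_succ_lt hi⟩
  set b : Fin n := ⟨i + 1, hi⟩
  have hab : a < b := by simp [a, b, Fin.lt_def]
  set s := Equiv.swap a b with hs
  have hsa : s a = b := Equiv.swap_apply_left a b
  have hsb : s b = a := Equiv.swap_apply_right a b
  rw [adjSwap_eq hi]
  unfold inversions
  set A := Finset.univ.filter fun p : Fin n × Fin n => p.1 < p.2 ∧ (w * s) p.2 < (w * s) p.1
    with hA
  set B := Finset.univ.filter fun p : Fin n × Fin n => p.1 < p.2 ∧ w p.2 < w p.1 with hB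
  have hmemA : (a, b) ∈ A := by
    simp only [hA, Finset.mem_filter, Finset.mem_univ, true_and]
    refine ⟨hab, ?_⟩
    simpa [Equiv.Perm.mul_apply, hsa, hsb] using hw
  have hmemB : (a, b) ∉ B := by
    simp only [hB, Finset.mem_filter, Finset.mem_univ, true_and]
    intro ⟨_, h⟩; exact absurd hw (not_lt.2 h.le)
  have key : (A.erase (a, b)).card = (B.erase (a, b)).card := by
    apply Finset.card_bij' (fun p _ => (s p.1, s p.2)) (fun p _ => (s p.1, s p.2))
    · intro p hp
      obtain ⟨hpe, hp⟩ := Finset.mem_erase.1 hp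
      simp only [hA, Finset.mem_filter, Finset.mem_univ, true_and] at hp
      obtain ⟨h1, h2⟩ := hp
      have hlt : s p.1 < s p.2 := swap_adj_lt hi h1 (by
        intro h
        apply hpe
        rw [Prod.ext_iff] at h ⊢
        exact ⟨h.1, h.2⟩)
      refine Finset.mem_erase.2 ⟨?_, ?_⟩
      · intro h
        rw [Prod.ext_iff] at h
        have h1' : p.1 = b := by
          have := congrArg s h.1
          simp only [hs, Equiv.swap_apply_self, Equiv.swap_apply_left] at this
          exact this
        have h2' : p.2 = a := by
          have := congrArg s h.2
          simp only [hs, Equiv.swap_apply_self, Equiv.swap_apply_right] at this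
          exact this
        rw [h1', h2'] at h1; exact absurd h1 (not_lt.2 hab.le)
      · simp only [hB, Finset.mem_filter, Finset.mem_univ, true_and]
        exact ⟨hlt, by simpa [Equiv.Perm.mul_apply] using h2⟩
    · intro p hp
      obtain ⟨hpe, hp⟩ := Finset.mem_erase.1 hp
      simp only [hB, Finset.mem_filter, Finset.mem_univ, true_and] at hp
      obtain ⟨h1, h2⟩ := hp
      have hlt : s p.1 < s p.2 := swap_adj_lt hi h1 (by
        intro h; apply hpe; rw [Prod.ext_iff] at h ⊢; exact ⟨h.1, h.2⟩)
      refine Finset.mem_erase.2 ⟨?_, ?_⟩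
      · intro h
        rw [Prod.ext_iff] at h
        have h1' : p.1 = b := by
          have := congrArg s h.1
          simp only [hs, Equiv.swap_apply_self, Equiv.swap_apply_left] at this
          exact this
        have h2' : p.2 = a := by
          have := congrArg s h.2
          simp only [hs, Equiv.swap_apply_self, Equiv.swap_apply_right] at this
          exact this
        rw [h1', h2'] at h1; exact absurd h1 (not_lt.2 hab.le)
      · simp only [hA, Finset.mem_filter, Finset.mem_univ, true_and]
        refine ⟨hlt, ?_⟩
        simpa [Equiv.Perm.mul_apply, hs, Equiv.swap_apply_self] using h2
    · intro p hp; simp [hs, Equiv.swap_apply_self]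
    · intro p hp; simp [hs, Equiv.swap_apply_self]
  calc A.card = (A.erase (a, b)).card + 1 := by
        rw [Finset.card_erase_of_mem hmemA]
        have : 0 < A.card := Finset.card_pos.2 ⟨_, hmemA⟩
        omega
    _ = (B.erase (a, b)).card + 1 := by rw [key]
    _ = B.card + 1 := by rw [Finset.erase_eq_of_notMem hmemB]

end Aux

/-- A list `l` of indices (0-indexed, each in `{0, …, n-2}`) is a reduced word
for the permutation `w` if `w` is the composite of the corresponding adjacent
transpositions and the length of `l` equals the number of inversions of `w`. -/
def IsReducedWord (n : ℕ) (w : Equiv.Perm (Fin n)) (l : List ℕ) : Prop :=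
  (∀ i ∈ l, i + 1 < n) ∧ (l.map (adjSwap n)).prod = w ∧ l.length = inversions n w

/-- The product `M_{i_1} ⋯ M_{i_ℓ}` of bowling-ball matrices along a word. -/

lemma inversions_one : inversions n 1 = 0 := by
  unfold inversions
  rw [Finset.card_eq_zero, Finset.filter_eq_empty_iff]
  rintro p - ⟨h1, h2⟩
  simp only [Equiv.Perm.one_apply] at h2
  exact absurd h1 (not_lt.2 h2.le)

lemma perm_eq_one_of_noDescent (w : Equiv.Perm (Fin n))
    (h : ∀ j (hj : j + 1 < n), w ⟨j, Nat.lt_of_succ_lt hj⟩ < w ⟨j + 1, hj⟩) : w = 1 := by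
  rcases Nat.eq_zero_or_pos n with hn | hn
  · ext x; exact absurd x.2 (by omega)
  obtain ⟨m, rfl⟩ : ∃ m, n = m + 1 := ⟨n - 1, by omega⟩
  have hsm : StrictMono ⇑w := by
    rw [Fin.strictMono_iff_lt_succ]
    intro j
    have := h j.val (by omega)
    exact this
  have h2 : Set.range ⇑w = Set.range (id : Fin (m + 1) → Fin (m + 1)) := by
    simp [Set.range_id, Set.range_eq_univ.2 w.surjective]
  haveI : WellFoundedLT (Fin (m + 1)) := inferInstance
  have h3 : ⇑w = id :=
    (StrictMono.range_inj (β := Fin (m + 1)) (γ := Fin (m + 1)) hsm strictMono_id).1 h2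
  ext x
  exact congrArg Fin.val (congrFun h3 x)

lemma exists_reducedWord (w : Equiv.Perm (Fin n)) :
    ∃ l : List ℕ, (∀ i ∈ l, i + 1 < n) ∧ (l.map (adjSwap n)).prod = w ∧
      l.length = inversions n w := by
  generalize hk : inversions n w = k
  induction k generalizing w with
  | zero =>
    have hw1 : w = 1 := by
      apply perm_eq_one_of_noDescent
      intro j hj
      rcases lt_trichotomy (w ⟨j, Nat.lt_of_succ_lt hj⟩) (w ⟨j + 1, hj⟩) with h | h | h
      · exact h
      · exact absurd (w.injective h) (by simp [Fin.ext_iff])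
      · exfalso
        have : ((⟨j, Nat.lt_of_succ_lt hj⟩ : Fin n), (⟨j + 1, hj⟩ : Fin n)) ∈
            Finset.univ.filter fun p : Fin n × Fin n => p.1 < p.2 ∧ w p.2 < w p.1 := by
          simp only [Finset.mem_filter, Finset.mem_univ, true_and]
          exact ⟨by simp [Fin.lt_def], h⟩
        have hc : 0 < inversions n w := Finset.card_pos.2 ⟨_, this⟩
        omega
    exact ⟨[], by simp, by simp [hw1], by simp [hw1, inversions_one, hk]⟩
  | succ k ih =>
    -- w has an adjacent descent
    have hne : ∃ j, ∃ hj : j + 1 < n, w ⟨j + 1, hj⟩ < w ⟨j, Nat.lt_of_succ_lt hj⟩ := by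
      by_contra hcon
      push_neg at hcon
      have hw1 : w = 1 := by
        apply perm_eq_one_of_noDescent
        intro j hj
        rcases lt_trichotomy (w ⟨j, Nat.lt_of_succ_lt hj⟩) (w ⟨j + 1, hj⟩) with h | h | h
        · exact h
        · exact absurd (w.injective h) (by simp [Fin.ext_iff])
        · exact absurd h (not_lt.2 (hcon j hj))
      rw [hw1, inversions_one] at hk; omega
    obtain ⟨j, hj, hdesc⟩ := hne
    set w' := w * adjSwap n j with hw'
    have hss : adjSwap n j * adjSwap n j = 1 := by
      rw [adjSwap_eq hj]; exact Equiv.swap_mul_self _ _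
    have hww : w' * adjSwap n j = w := by
      rw [hw', mul_assoc, hss, mul_one]
    have hasc : w' ⟨j, Nat.lt_of_succ_lt hj⟩ < w' ⟨j + 1, hj⟩ := by
      rw [hw']
      simpa [Equiv.Perm.mul_apply, adjSwap_eq hj, Equiv.swap_apply_left,
        Equiv.swap_apply_right] using hdesc
    have hinv : inversions n w = inversions n w' + 1 := by
      rw [← hww]; exact inversions_mul_adjSwap hj w' hasc
    obtain ⟨l, hl1, hl2, hl3⟩ := ih w' (by omega)
    refine ⟨l ++ [j], ?_, ?_, ?_⟩
    · intro x hx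
      rcases List.mem_append.1 hx with h | h
      · exact hl1 x h
      · simp at h; omega
    · rw [List.map_append, List.prod_append]
      simp [hl2, hww]
    · simp [hl3, hk]

def prodBowlM (F : Type*) [Field F] (q : F) (n N : ℕ) (l : List ℕ) :
    Matrix (Fin n → Fin (N + 1)) (Fin n → Fin (N + 1)) F :=
  (l.map (bowlM F q n N)).prod


lemma prodBowlM_append (F : Type*) [Field F] (q : F) (n N : ℕ) (l : List ℕ) (j : ℕ) :
    prodBowlM F q n N (l ++ [j]) = prodBowlM F q n N l * bowlM F q n N j := by
  unfold prodBowlM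
  rw [List.map_append, List.prod_append]
  simp

/-- **Factorization identity (Equation (1) at the matrix level).**
Let `P w` be the product of bowling-ball matrices along any reduced word of
`w` (the hypothesis `hP` pins down `P` since every permutation has a
reduced word).  For every index `i` (0-indexed, `i+1 < n`), the alternating
sum over all permutations factors as
`∑_w sgn(w)·P_w = (∑_{w : w(i) < w(i+1)} sgn(w)·P_w) * (I − M_i)`. -/
theorem prodBowlM_alternating_sum_factorization (F : Type*) [Field F] (q : F) (n N : ℕ)
    (hn : 2 ≤ n) (hN : 1 ≤ N)
    (P : Equiv.Perm (Fin n) → Matrix (Fin n → Fin (N + 1)) (Fin n → Fin (N + 1)) F)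
    (hP : ∀ w l, IsReducedWord n w l → P w = prodBowlM F q n N l)
    (i : ℕ) (hi : i + 1 < n) :
    ∑ w : Equiv.Perm (Fin n), ((Equiv.Perm.sign w : ℤ) : F) • P w =
      (∑ w ∈ Finset.univ.filter
          (fun w : Equiv.Perm (Fin n) => w ⟨i, Nat.lt_of_succ_lt hi⟩ < w ⟨i + 1, hi⟩),
        ((Equiv.Perm.sign w : ℤ) : F) • P w) * (1 - bowlM F q n N i) := by
  classical
  set a : Fin n := ⟨i, Nat.lt_of_succ_lt hi⟩ with ha
  set b : Fin n := ⟨i + 1, hi⟩ with hb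
  have hab : a ≠ b := by simp [ha, hb, Fin.ext_iff]
  set s := adjSwap n i with hs
  have hsa : s a = b := by rw [hs, adjSwap_eq hi]; exact Equiv.swap_apply_left a b
  have hsb : s b = a := by rw [hs, adjSwap_eq hi]; exact Equiv.swap_apply_right a b
  have hss : s * s = 1 := by rw [hs, adjSwap_eq hi]; exact Equiv.swap_mul_self _ _
  set D := Finset.univ.filter (fun w : Equiv.Perm (Fin n) => w a < w b) with hD
  -- key pointwise fact
  have hPmul : ∀ w : Equiv.Perm (Fin n), w a < w b →
      P (w * s) = P w * bowlM F q n N i := by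
    intro w hw
    obtain ⟨l, hl1, hl2, hl3⟩ := exists_reducedWord w
    have hred : IsReducedWord n w l := ⟨hl1, hl2, hl3⟩
    have hred' : IsReducedWord n (w * s) (l ++ [i]) := by
      refine ⟨?_, ?_, ?_⟩
      · intro x hx
        rcases List.mem_append.1 hx with h | h
        · exact hl1 x h
        · simp at h; omega
      · rw [List.map_append, List.prod_append]
        simp [hl2, hs]
      · rw [hs, inversions_mul_adjSwap hi w hw]
        simp [hl3]
    rw [hP w l hred, hP (w * s) (l ++ [i]) hred', prodBowlM_append]
  have hsign : ∀ w : Equiv.Perm (Fin n),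
      ((Equiv.Perm.sign (w * s) : ℤ) : F) = -((Equiv.Perm.sign w : ℤ) : F) := by
    intro w
    rw [hs, adjSwap_eq hi, Equiv.Perm.sign_mul, Equiv.Perm.sign_swap hab]
    push_cast
    ring
  rw [← Finset.sum_filter_add_sum_filter_not Finset.univ
    (fun w : Equiv.Perm (Fin n) => w a < w b)]
  have hsum2 : ∑ w ∈ Finset.univ.filter
        (fun w : Equiv.Perm (Fin n) => ¬ w a < w b),
      ((Equiv.Perm.sign w : ℤ) : F) • P w
      = ∑ w ∈ D, ((Equiv.Perm.sign (w * s) : ℤ) : F) • P (w * s) := by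
    apply Finset.sum_nbij' (fun w => w * s) (fun w => w * s)
    · intro w hw
      simp only [Finset.mem_filter, Finset.mem_univ, true_and, not_lt] at hw
      simp only [hD, Finset.mem_filter, Finset.mem_univ, true_and]
      have hne : w b ≠ w a := fun h => hab (w.injective h).symm
      have : w b < w a := lt_of_le_of_ne hw hne
      simpa [Equiv.Perm.mul_apply, hsa, hsb] using this
    · intro w hw
      simp only [hD, Finset.mem_filter, Finset.mem_univ, true_and] at hw
      simp only [Finset.mem_filter, Finset.mem_univ, true_and, not_lt]
      have : (w * s) a = w b := by simp [Equiv.Perm.mul_apply, hsa]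
      have h2 : (w * s) b = w a := by simp [Equiv.Perm.mul_apply, hsb]
      rw [this, h2]
      exact hw.le
    · intro w _; rw [mul_assoc, hss, mul_one]
    · intro w _; rw [mul_assoc, hss, mul_one]
    · intro w _; rw [mul_assoc, hss, mul_one]
  rw [hsum2]
  have hsum3 : ∑ w ∈ D, ((Equiv.Perm.sign (w * s) : ℤ) : F) • P (w * s)
      = -((∑ w ∈ D, ((Equiv.Perm.sign w : ℤ) : F) • P w) * bowlM F q n N i) := by
    rw [Finset.sum_mul, ← Finset.sum_neg_distrib]
    apply Finset.sum_congr rfl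
    intro w hw
    simp only [hD, Finset.mem_filter, Finset.mem_univ, true_and] at hw
    rw [hPmul w hw, hsign w, smul_mul_assoc]
    simp
  rw [hsum3, mul_one_sub, sub_eq_add_neg]
end
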